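/- For every q > 1, every real s, and every w > 0, one has C(s) ≤ (q/(q−1))·w·C(s/w) + (4/(q−1))·w^q, where C(s) = 2·s·arsinh(s/2) − 2·√(s² + 4) + 4. -/

import Mathlib

/-- The Legendre conjugate of `C*(ζ) = 4 cosh(ζ/2) - 4`. -/
noncomputable def Cfun (s : ℝ) : ℝ :=
  2 * s * Real.arsinh (s / 2) - 2 * Real.sqrt (s ^ 2 + 4) + 4

/-- Tangent line inequality for `cosh`. -/
lemma cosh_tangent (a v : ℝ) : Real.sinh a * (v - a) ≤ Real.cosh v - Real.cosh a := by
  have h1 : Real.exp a * (1 + (v - a)) ≤ Real.exp v := by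
    have h := Real.add_one_le_exp (v - a)
    have h' := mul_le_mul_of_nonneg_left h (Real.exp_pos a).le
    calc Real.exp a * (1 + (v - a)) = Real.exp a * ((v - a) + 1) := by ring
      _ ≤ Real.exp a * Real.exp (v - a) := h'
      _ = Real.exp v := by rw [← Real.exp_add]; ring_nf
  have h2 : Real.exp (-a) * (1 - (v - a)) ≤ Real.exp (-v) := by
    have h := Real.add_one_le_exp (a - v)
    have h' := mul_le_mul_of_nonneg_left h (Real.exp_pos (-a)).le
    calc Real.exp (-a) * (1 - (v - a)) = Real.exp (-a) * ((a - v) + 1) := by ring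
      _ ≤ Real.exp (-a) * Real.exp (a - v) := h'
      _ = Real.exp (-v) := by rw [← Real.exp_add]; ring_nf
  rw [Real.cosh_eq, Real.cosh_eq, Real.sinh_eq]
  nlinarith [h1, h2]

lemma sqrt_sq_add_four (σ : ℝ) :
    Real.sqrt (σ ^ 2 + 4) = 2 * Real.cosh (Real.arsinh (σ / 2)) := by
  rw [Real.cosh_arsinh]
  rw [show σ ^ 2 + 4 = 4 * (1 + (σ / 2) ^ 2) by ring,
    Real.sqrt_mul (by norm_num : (0:ℝ) ≤ 4),
    show (4:ℝ) = 2 ^ 2 by norm_num, Real.sqrt_sq (by norm_num : (0:ℝ) ≤ 2)]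

/-- Fenchel–Young: `σ u - C*(u) ≤ C(σ)`. -/
lemma fenchel (σ u : ℝ) : σ * u - 4 * Real.cosh (u / 2) + 4 ≤ Cfun σ := by
  set a := Real.arsinh (σ / 2) with ha
  have hsinh : Real.sinh a = σ / 2 := Real.sinh_arsinh _
  have hsqrt := sqrt_sq_add_four σ
  have htan := cosh_tangent a (u / 2)
  rw [hsinh] at htan
  unfold Cfun
  rw [hsqrt]
  nlinarith [htan]

/-- `cosh (θ x) ≤ (cosh x) ^ θ` for `θ ∈ [0,1]`. -/
lemma cosh_mul_le_rpow (x θ : ℝ) (h0 : 0 ≤ θ) (h1 : θ ≤ 1) :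
    Real.cosh (θ * x) ≤ Real.cosh x ^ θ := by
  have hcc := (Real.concaveOn_rpow h0 h1).2 (Set.mem_Ici.2 (Real.exp_pos x).le)
    (Set.mem_Ici.2 (Real.exp_pos (-x)).le)
    (by norm_num : (0:ℝ) ≤ 1/2) (by norm_num : (0:ℝ) ≤ 1/2) (by norm_num)
  have e1 : Real.exp x ^ θ = Real.exp (θ * x) := by
    rw [Real.rpow_def_of_pos (Real.exp_pos x), Real.log_exp]; ring_nf
  have e2 : Real.exp (-x) ^ θ = Real.exp (-(θ * x)) := by
    rw [Real.rpow_def_of_pos (Real.exp_pos (-x)), Real.log_exp]; ring_nf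
  rw [Real.cosh_eq, Real.cosh_eq]
  calc (Real.exp (θ * x) + Real.exp (-(θ * x))) / 2
      = 1/2 * Real.exp x ^ θ + 1/2 * Real.exp (-x) ^ θ := by rw [e1, e2]; ring
    _ ≤ (1/2 * Real.exp x + 1/2 * Real.exp (-x)) ^ θ := hcc
    _ = ((Real.exp x + Real.exp (-x)) / 2) ^ θ := by ring_nf

/-- Subadditivity of `rpow`: `(A + 1) ^ θ ≤ A ^ θ + 1` for `A ≥ 0`, `0 ≤ θ ≤ 1`. -/
lemma rpow_add_one_le (A θ : ℝ) (hA : 0 ≤ A) (h0 : 0 ≤ θ) (h1 : θ ≤ 1) :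
    (A + 1) ^ θ ≤ A ^ θ + 1 := by
  have h := NNReal.rpow_add_le_add_rpow (Real.toNNReal A) 1 h0 h1
  rw [← NNReal.coe_le_coe] at h
  push_cast at h
  rwa [Real.coe_toNNReal A hA, Real.one_rpow] at h

/-- Key inequality: `cosh (θ x) - 1 ≤ (cosh x - 1) ^ θ` for `θ ∈ [0,1]`. -/
lemma cosh_sub_one_rpow (x θ : ℝ) (h0 : 0 ≤ θ) (h1 : θ ≤ 1) :
    Real.cosh (θ * x) - 1 ≤ (Real.cosh x - 1) ^ θ := by
  have hA : 0 ≤ Real.cosh x - 1 := by linarith [Real.one_le_cosh x]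
  have h2 := rpow_add_one_le (Real.cosh x - 1) θ hA h0 h1
  have h3 := cosh_mul_le_rpow x θ h0 h1
  have h4 : Real.cosh x ^ θ = (Real.cosh x - 1 + 1) ^ θ := by ring_nf
  rw [h4] at h3
  linarith

theorem magical_estimate (q : ℝ) (hq : 1 < q) (s : ℝ) (w : ℝ) (hw : 0 < w) :
    Cfun s ≤ q / (q - 1) * (w * Cfun (s / w)) + 4 / (q - 1) * w ^ q := by
  have hc : 0 < q - 1 := by linarith
  have hq0 : 0 < q := by linarith
  set t := 2 * Real.arsinh (s / 2) with ht
  have hCs : Cfun s = s * t - 4 * Real.cosh (t / 2) + 4 := by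
    unfold Cfun
    rw [sqrt_sq_add_four s, ht]
    rw [show 2 * Real.arsinh (s / 2) / 2 = Real.arsinh (s / 2) by ring]
    ring
  set θ := (q - 1) / q with hθ
  have hθ0 : 0 < θ := div_pos hc hq0
  have hθ1 : θ ≤ 1 := by rw [hθ, div_le_one hq0]; linarith
  set u := θ * t with hu
  -- Fenchel–Young at σ = s / w
  have h1 := fenchel (s / w) u
  have h1' : s * u - 4 * w * Real.cosh (u / 2) + 4 * w ≤ w * Cfun (s / w) := by
    have h := mul_le_mul_of_nonneg_left h1 hw.le
    have hww : w * (s / w * u - 4 * Real.cosh (u / 2) + 4) =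
        s * u - 4 * w * Real.cosh (u / 2) + 4 * w := by
      field_simp
    linarith [hww ▸ h]
  -- Key estimate: q w X ≤ w^q + (q-1) Y with X, Y the cosh - 1 terms
  have hXnn : 0 ≤ Real.cosh (u / 2) - 1 := by linarith [Real.one_le_cosh (u / 2)]
  have hYnn : 0 ≤ Real.cosh (t / 2) - 1 := by linarith [Real.one_le_cosh (t / 2)]
  have hXY : Real.cosh (u / 2) - 1 ≤ (Real.cosh (t / 2) - 1) ^ θ := by
    have h := cosh_sub_one_rpow (t / 2) θ hθ0.le hθ1
    rwa [show θ * (t / 2) = u / 2 by rw [hu]; ring] at h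
  have hconj : q.HolderConjugate (q / (q - 1)) := Real.HolderConjugate.conjExponent hq
  have hyoung := Real.young_inequality_of_nonneg hw.le hXnn hconj
  have hXp : (Real.cosh (u / 2) - 1) ^ (q / (q - 1)) ≤ Real.cosh (t / 2) - 1 := by
    calc (Real.cosh (u / 2) - 1) ^ (q / (q - 1))
        ≤ ((Real.cosh (t / 2) - 1) ^ θ) ^ (q / (q - 1)) :=
          Real.rpow_le_rpow hXnn hXY (by positivity)
      _ = (Real.cosh (t / 2) - 1) ^ (θ * (q / (q - 1))) := by rw [← Real.rpow_mul hYnn]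
      _ = Real.cosh (t / 2) - 1 := by
          rw [show θ * (q / (q - 1)) = 1 by rw [hθ]; field_simp, Real.rpow_one]
  have hqp : (0:ℝ) < q / (q - 1) := by positivity
  have hkey : q * (w * (Real.cosh (u / 2) - 1)) ≤
      w ^ q + (q - 1) * (Real.cosh (t / 2) - 1) := by
    have h6 : (Real.cosh (u / 2) - 1) ^ (q / (q - 1)) / (q / (q - 1)) ≤
        (Real.cosh (t / 2) - 1) / (q / (q - 1)) := by gcongr
    have h7 : w * (Real.cosh (u / 2) - 1) ≤
        w ^ q / q + (Real.cosh (t / 2) - 1) / (q / (q - 1)) := by linarith [hyoung]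
    have h8 : (Real.cosh (t / 2) - 1) / (q / (q - 1)) =
        (q - 1) * (Real.cosh (t / 2) - 1) / q := by
      field_simp
    rw [h8] at h7
    have h9 := mul_le_mul_of_nonneg_left h7 hq0.le
    calc q * (w * (Real.cosh (u / 2) - 1))
        ≤ q * (w ^ q / q + (q - 1) * (Real.cosh (t / 2) - 1) / q) := h9
      _ = w ^ q + (q - 1) * (Real.cosh (t / 2) - 1) := by field_simp
  -- Put everything together
  have hut : q * u = (q - 1) * t := by rw [hu, hθ]; field_simp
  have hsu : q * (s * u) = (q - 1) * (s * t) := by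
    calc q * (s * u) = s * (q * u) := by ring
      _ = s * ((q - 1) * t) := by rw [hut]
      _ = (q - 1) * (s * t) := by ring
  rw [div_mul_eq_mul_div, div_mul_eq_mul_div, ← add_div, le_div_iff₀ hc, hCs]
  have h10 := mul_le_mul_of_nonneg_left h1' hq0.le
  nlinarith [h10, hkey, hsu]
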